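/- arXiv:2103.14722 — 4 statements merged into one kernel-verified Lean document; each statement's English description precedes it below -/
import Mathlib

section
/- Let V : ℝ^n → ℝ be convex with V(0) = 0, and suppose there are constants a, c₁, c₂ > 0 with c₁‖y‖^a ≤ V(y) ≤ c₂‖y‖^a for all y. Let f̂ : ℝ^n → ℝ^n, let β ∈ (0,1), and define f : ℝ^n → ℝ^n by f(x) = f̂(x) if V(f̂(x)) ≤ β·V(x), and f(x) = (β·V(x)/V(f̂(x)))·f̂(x) otherwise. Then every trajectory x_{t+1} = f(x_t) satisfies ‖x_t‖^a ≤ (c₂/c₁)·β^t·‖x_0‖^a for all t ∈ ℕ; i.e., the origin is globally exponentially stable for the dynamics f. -/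
/-- Global exponential stability of the convexity-based stable dynamic model:
every trajectory of `f` satisfies `‖x t‖ ^ a ≤ (c₂ / c₁) * β ^ t * ‖x 0‖ ^ a`. -/
theorem stmt_4 {n : ℕ} (V : EuclideanSpace ℝ (Fin n) → ℝ)
    (hV : ConvexOn ℝ Set.univ V) (hV0 : V 0 = 0)
    (a c₁ c₂ : ℝ) (ha : 0 < a) (hc₁ : 0 < c₁) (hc₂ : 0 < c₂)
    (hVlb : ∀ y, c₁ * ‖y‖ ^ a ≤ V y) (hVub : ∀ y, V y ≤ c₂ * ‖y‖ ^ a)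
    (fhat : EuclideanSpace ℝ (Fin n) → EuclideanSpace ℝ (Fin n))
    (β : ℝ) (hβ : β ∈ Set.Ioo (0 : ℝ) 1)
    (f : EuclideanSpace ℝ (Fin n) → EuclideanSpace ℝ (Fin n))
    (hf₁ : ∀ x, V (fhat x) ≤ β * V x → f x = fhat x)
    (hf₂ : ∀ x, ¬ V (fhat x) ≤ β * V x → f x = (β * V x / V (fhat x)) • fhat x) :
    ∀ x : ℕ → EuclideanSpace ℝ (Fin n), (∀ t, x (t + 1) = f (x t)) →
      ∀ t, ‖x t‖ ^ a ≤ (c₂ / c₁) * β ^ t * ‖x 0‖ ^ a := by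
  obtain ⟨hβ0, hβ1⟩ := hβ
  have hVnn : ∀ y, 0 ≤ V y := fun y =>
    le_trans (by positivity) (hVlb y)
  -- key: V (f x) ≤ β * V x
  have key : ∀ x, V (f x) ≤ β * V x := by
    intro x
    by_cases h : V (fhat x) ≤ β * V x
    · rw [hf₁ x h]; exact h
    · rw [hf₂ x h]
      push_neg at h
      have hVx : 0 ≤ V x := hVnn x
      have hVf : 0 < V (fhat x) := lt_of_le_of_lt (by positivity) h
      set l : ℝ := β * V x / V (fhat x) with hl
      have hl0 : 0 ≤ l := by positivity
      have hl1 : l ≤ 1 := by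
        rw [hl, div_le_one hVf]; exact h.le
      have hcvx := hV.2 (Set.mem_univ (fhat x)) (Set.mem_univ (0 : EuclideanSpace ℝ (Fin n)))
        hl0 (by linarith : (0:ℝ) ≤ 1 - l) (by ring)
      simp only [smul_zero, add_zero, hV0, mul_zero] at hcvx
      calc V (l • fhat x) ≤ l * V (fhat x) := hcvx
        _ = β * V x := by rw [hl]; field_simp
  intro x hx t
  have hVt : V (x t) ≤ β ^ t * V (x 0) := by
    induction t with
    | zero => simp
    | succ k ih =>
      rw [hx k]
      calc V (f (x k)) ≤ β * V (x k) := key (x k)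
        _ ≤ β * (β ^ k * V (x 0)) := by nlinarith
        _ = β ^ (k + 1) * V (x 0) := by ring
  have h1 : c₁ * ‖x t‖ ^ a ≤ β ^ t * (c₂ * ‖x 0‖ ^ a) := by
    calc c₁ * ‖x t‖ ^ a ≤ V (x t) := hVlb _
      _ ≤ β ^ t * V (x 0) := hVt
      _ ≤ β ^ t * (c₂ * ‖x 0‖ ^ a) := by
          have := hVub (x 0); nlinarith [pow_pos hβ0 t]
  calc ‖x t‖ ^ a ≤ β ^ t * (c₂ * ‖x 0‖ ^ a) / c₁ := by
        rw [le_div_iff₀ hc₁]; linarith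
    _ = (c₂ / c₁) * β ^ t * ‖x 0‖ ^ a := by ring
end

section
/- Let V : ℝ^n → ℝ and f̂ : ℝ^n → ℝ^n be continuously differentiable, let β ∈ (0,1), and let x₀ ∈ ℝ^n and γ₀ ∈ ℝ satisfy V(γ₀·f̂(x₀)) = β·V(x₀) and ⟪∇V(γ₀·f̂(x₀)), f̂(x₀)⟫ ≠ 0. Then there exist an open neighborhood U of x₀ and a continuously differentiable function φ : U → ℝ such that φ(x₀) = γ₀ and V(φ(x)·f̂(x)) = β·V(x) for all x ∈ U. -/
open Topology Filter

/-- Implicit function theorem for the scaling factor: if `V (γ₀ • f̂ x₀) = β * V x₀`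
and `⟪∇V (γ₀ • f̂ x₀), f̂ x₀⟫ ≠ 0`, then on a neighborhood `U` of `x₀` there is a
`C¹` function `φ` with `φ x₀ = γ₀` and `V (φ x • f̂ x) = β * V x` on `U`. -/
theorem stmt_8 {n : ℕ} (V : EuclideanSpace ℝ (Fin n) → ℝ)
    (fhat : EuclideanSpace ℝ (Fin n) → EuclideanSpace ℝ (Fin n))
    (hV : ContDiff ℝ 1 V) (hfhat : ContDiff ℝ 1 fhat)
    (β : ℝ) (hβ : β ∈ Set.Ioo (0 : ℝ) 1)
    (x₀ : EuclideanSpace ℝ (Fin n)) (γ₀ : ℝ)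
    (hroot : V (γ₀ • fhat x₀) = β * V x₀)
    (hgrad : (inner ℝ (gradient V (γ₀ • fhat x₀)) (fhat x₀) : ℝ) ≠ 0) :
    ∃ U : Set (EuclideanSpace ℝ (Fin n)), IsOpen U ∧ x₀ ∈ U ∧
      ∃ φ : EuclideanSpace ℝ (Fin n) → ℝ, ContDiffOn ℝ 1 φ U ∧ φ x₀ = γ₀ ∧
        ∀ x ∈ U, V (φ x • fhat x) = β * V x := by
  classical
  let E := EuclideanSpace ℝ (Fin n)
  set F : E × ℝ → ℝ := fun p => V (p.2 • fhat p.1) - β * V p.1 with hFdef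
  set p₀ : E × ℝ := (x₀, γ₀) with hp₀
  have hFc : ContDiff ℝ 1 F := by
    apply ContDiff.sub
    · exact hV.comp (contDiff_snd.smul (hfhat.comp contDiff_fst))
    · exact contDiff_const.mul (hV.comp contDiff_fst)
  set G : E × ℝ → E × ℝ := fun p => (p.1, F p) with hGdef
  have hGc : ContDiff ℝ 1 G := contDiff_fst.prodMk hFc
  have hFd : DifferentiableAt ℝ F p₀ := (hFc.differentiable one_ne_zero).differentiableAt
  set L := fderiv ℝ F p₀ with hL
  set c : ℝ := inner ℝ (gradient V (γ₀ • fhat x₀)) (fhat x₀) with hc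
  have hcne : c ≠ 0 := hgrad
  -- value of c as fderiv of V
  have hcval : (fderiv ℝ V (γ₀ • fhat x₀)) (fhat x₀) = c := by
    rw [hc, gradient, InnerProductSpace.toDual_symm_apply]
  -- L (0, 1) = c
  have hL01 : L (0, 1) = c := by
    have hcurve : HasDerivAt (fun t : ℝ => ((x₀, t) : E × ℝ)) ((0 : E), (1 : ℝ)) γ₀ :=
      (hasDerivAt_const γ₀ x₀).prodMk (hasDerivAt_id γ₀)
    have h1 : HasDerivAt (fun t : ℝ => F (x₀, t)) (L (0, 1)) γ₀ :=
      (hFd.hasFDerivAt.comp_hasDerivAt γ₀ hcurve)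
    have h2 : HasDerivAt (fun t : ℝ => F (x₀, t)) c γ₀ := by
      have hsm : HasDerivAt (fun t : ℝ => t • fhat x₀) (fhat x₀) γ₀ := by
        simpa using (hasDerivAt_id γ₀).smul_const (fhat x₀)
      have hVd : HasFDerivAt V (fderiv ℝ V (γ₀ • fhat x₀)) (γ₀ • fhat x₀) :=
        ((hV.differentiable one_ne_zero) (γ₀ • fhat x₀)).hasFDerivAt
      have h3 : HasDerivAt (fun t : ℝ => V (t • fhat x₀))
          ((fderiv ℝ V (γ₀ • fhat x₀)) (fhat x₀)) γ₀ := by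
        exact hVd.comp_hasDerivAt γ₀ hsm
      have h4 : HasDerivAt (fun t : ℝ => V (t • fhat x₀) - β * V x₀)
          ((fderiv ℝ V (γ₀ • fhat x₀)) (fhat x₀)) γ₀ := h3.sub_const _
      rw [hcval] at h4
      exact h4
    exact h1.unique h2
  -- decomposition of L
  have hdecomp : ∀ (u : E) (t : ℝ), L (u, t) = L (u, 0) + t * c := by
    intro u t
    have : ((u, t) : E × ℝ) = (u, (0 : ℝ)) + t • ((0 : E), (1 : ℝ)) := by
      simp [Prod.ext_iff]
    rw [this, map_add, map_smul, smul_eq_mul, hL01]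
  -- the invertible derivative of G at p₀
  set A : (E × ℝ) →L[ℝ] (E × ℝ) := (ContinuousLinearMap.fst ℝ E ℝ).prod L with hA
  set B : (E × ℝ) →L[ℝ] (E × ℝ) := (ContinuousLinearMap.fst ℝ E ℝ).prod
      (c⁻¹ • (ContinuousLinearMap.snd ℝ E ℝ -
        L ∘L ((ContinuousLinearMap.inl ℝ E ℝ) ∘L (ContinuousLinearMap.fst ℝ E ℝ)))) with hB
  have hBA : ∀ p : E × ℝ, B (A p) = p := by
    intro p
    have h0 : L p = L (p.1, 0) + p.2 * c := by
      simpa using hdecomp p.1 p.2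
    simp only [hA, hB, ContinuousLinearMap.prod_apply, ContinuousLinearMap.coe_fst',
      ContinuousLinearMap.smul_apply, ContinuousLinearMap.sub_apply,
      ContinuousLinearMap.coe_snd', ContinuousLinearMap.comp_apply,
      ContinuousLinearMap.inl_apply]
    rw [h0]
    have : c⁻¹ • (L (p.1, 0) + p.2 * c - L (p.1, 0)) = p.2 := by
      rw [smul_eq_mul]
      field_simp
      ring
    rw [this]
  have hAB : ∀ p : E × ℝ, A (B p) = p := by
    intro p
    simp only [hA, hB, ContinuousLinearMap.prod_apply, ContinuousLinearMap.coe_fst',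
      ContinuousLinearMap.smul_apply, ContinuousLinearMap.sub_apply,
      ContinuousLinearMap.coe_snd', ContinuousLinearMap.comp_apply,
      ContinuousLinearMap.inl_apply]
    rw [hdecomp p.1 (c⁻¹ • (p.2 - L (p.1, 0)))]
    have : L (p.1, 0) + c⁻¹ • (p.2 - L (p.1, 0)) * c = p.2 := by
      rw [smul_eq_mul]
      field_simp
      ring
    rw [this]
  set e : (E × ℝ) ≃L[ℝ] (E × ℝ) := ContinuousLinearEquiv.equivOfInverse A B hBA hAB with he
  have hG' : HasFDerivAt G (e : (E × ℝ) →L[ℝ] (E × ℝ)) p₀ := by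
    have hAd : HasFDerivAt G A p₀ := hasFDerivAt_fst.prodMk hFd.hasFDerivAt
    exact hAd
  have hGa : ContDiffAt ℝ 1 G p₀ := hGc.contDiffAt
  -- local inverse
  set ψ : E × ℝ → E × ℝ := hGa.localInverse hG' one_ne_zero with hψdef
  have hψc : ContDiffAt ℝ 1 ψ (G p₀) := hGa.to_localInverse hG' one_ne_zero
  have hψp₀ : ψ (G p₀) = p₀ := hGa.localInverse_apply_image hG' one_ne_zero
  have hrinv : ∀ᶠ q in 𝓝 (G p₀), G (ψ q) = q :=
    (hGa.hasStrictFDerivAt' hG' one_ne_zero).eventually_right_inverse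
  obtain ⟨u, hu, hψu⟩ := hψc.contDiffOn le_rfl (by simp)
  obtain ⟨u', hu', hrinv'⟩ := hrinv.exists_mem
  obtain ⟨W, hWsub, hWopen, hWmem⟩ := mem_nhds_iff.1 (Filter.inter_mem hu hu')
  have hGp₀ : G p₀ = (x₀, (0 : ℝ)) := by
    simp only [hGdef, hFdef, hp₀]
    rw [hroot]
    simp
  set U : Set E := {x | ((x, (0 : ℝ)) : E × ℝ) ∈ W} with hU
  refine ⟨U, ?_, ?_, fun x => (ψ (x, 0)).2, ?_, ?_, ?_⟩
  · exact hWopen.preimage (continuous_id.prodMk continuous_const)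
  · show ((x₀, (0 : ℝ)) : E × ℝ) ∈ W
    rw [← hGp₀]; exact hWmem
  · have hι : ContDiff ℝ 1 (fun x : E => ((x, (0 : ℝ)) : E × ℝ)) :=
      contDiff_id.prodMk contDiff_const
    have h1 : ContDiffOn ℝ 1 (fun x : E => ψ (x, 0)) U := by
      apply ContDiffOn.comp (hψu.mono (fun q hq => (hWsub hq).1)) (hι.contDiffOn)
      intro x hx
      exact hx
    exact contDiff_snd.comp_contDiffOn h1
  · show (ψ (x₀, 0)).2 = γ₀
    rw [← hGp₀, hψp₀]
  · intro x hx
    have hxW : ((x, (0 : ℝ)) : E × ℝ) ∈ W := hx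
    have hGψ : G (ψ (x, 0)) = (x, 0) := hrinv' _ (hWsub hxW).2
    have h1 : (ψ (x, 0)).1 = x := congrArg Prod.fst hGψ
    have h2 : F (ψ (x, 0)) = 0 := congrArg Prod.snd hGψ
    simp only [hFdef] at h2
    rw [h1] at h2
    linarith
end

section
/- Let V : ℝ^n → ℝ and f̂ : ℝ^n → ℝ^n be continuously differentiable, with V(0) = 0, V(y) > 0 for y ≠ 0, and assume for every x the function h(γ) = V(γ·f̂(x)) has h'(γ) > 0 for all γ > 0 whenever f̂(x) ≠ 0. Let β ∈ (0,1) and let γ : ℝ^n → ℝ be a function satisfying: γ(x) = 1 whenever V(f̂(x)) ≤ β·V(x), and γ(x) ∈ (0,1) with V(γ(x)·f̂(x)) = β·V(x) whenever V(f̂(x)) > β·V(x). Then the dynamic model f(x) = γ(x)·f̂(x) is continuous on ℝ^n. -/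
/-- Continuity of the implicit stable dynamic model: under the stated regularity
and monotonicity-along-rays hypotheses, the piecewise model
`f x = γ x • f̂ x` (with `γ x = 1` in the sufficient-decrease case and `γ x` the
implicit root otherwise) is continuous. -/
theorem stmt_9 {n : ℕ} (V : EuclideanSpace ℝ (Fin n) → ℝ)
    (fhat : EuclideanSpace ℝ (Fin n) → EuclideanSpace ℝ (Fin n))
    (hV : ContDiff ℝ 1 V) (hfhat : ContDiff ℝ 1 fhat)
    (hV0 : V 0 = 0) (hVpos : ∀ y : EuclideanSpace ℝ (Fin n), y ≠ 0 → 0 < V y)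
    (hderiv : ∀ x : EuclideanSpace ℝ (Fin n), fhat x ≠ 0 → ∀ γ : ℝ, 0 < γ →
      0 < deriv (fun s : ℝ => V (s • fhat x)) γ)
    (β : ℝ) (hβ : β ∈ Set.Ioo (0 : ℝ) 1)
    (γ : EuclideanSpace ℝ (Fin n) → ℝ)
    (hγ₁ : ∀ x, V (fhat x) ≤ β * V x → γ x = 1)
    (hγ₂ : ∀ x, ¬ V (fhat x) ≤ β * V x →
      γ x ∈ Set.Ioo (0 : ℝ) 1 ∧ V (γ x • fhat x) = β * V x) :
    Continuous (fun x => γ x • fhat x) := by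
  obtain ⟨hβ0, hβ1⟩ := hβ
  have hVc : Continuous V := hV.continuous
  have hfc : Continuous fhat := hfhat.continuous
  have hγle : ∀ x, γ x ≤ 1 := by
    intro x
    by_cases h : V (fhat x) ≤ β * V x
    · simp [hγ₁ x h]
    · exact ((hγ₂ x h).1.2).le
  have hγpos : ∀ x, 0 < γ x := by
    intro x
    by_cases h : V (fhat x) ≤ β * V x
    · simp [hγ₁ x h]
    · exact (hγ₂ x h).1.1
  have hmono : ∀ x, fhat x ≠ 0 →
      StrictMonoOn (fun s : ℝ => V (s • fhat x)) (Set.Ici 0) := by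
    intro x hx
    apply strictMonoOn_of_deriv_pos (convex_Ici 0)
    · exact (hVc.comp (continuous_id.smul continuous_const)).continuousOn
    · intro s hs
      rw [interior_Ici] at hs
      exact hderiv x hx s hs
  rw [continuous_iff_continuousAt]
  intro x₀
  by_cases h0 : fhat x₀ = 0
  · -- squeeze to zero
    have hsq : Filter.Tendsto (fun x => γ x • fhat x) (nhds x₀) (nhds 0) := by
      have hbound : ∀ x, ‖γ x • fhat x‖ ≤ ‖fhat x‖ := by
        intro x
        rw [norm_smul, Real.norm_eq_abs]
        have h1 : |γ x| ≤ 1 := by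
          rw [abs_le]
          exact ⟨by linarith [hγpos x], hγle x⟩
        calc |γ x| * ‖fhat x‖ ≤ 1 * ‖fhat x‖ :=
              mul_le_mul_of_nonneg_right h1 (norm_nonneg _)
          _ = ‖fhat x‖ := one_mul _
      have h2 : Filter.Tendsto fhat (nhds x₀) (nhds 0) := by
        have := hfc.tendsto x₀; rwa [h0] at this
      exact squeeze_zero_norm hbound (by simpa using h2.norm)
    rw [ContinuousAt, h0, smul_zero]
    exact hsq
  · -- main case
    have hne : ∀ᶠ x in nhds x₀, fhat x ≠ 0 := hfc.continuousAt.eventually_ne h0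
    have hg0pos : 0 < γ x₀ := hγpos x₀
    have hg0le : γ x₀ ≤ 1 := hγle x₀
    have hVle : V (γ x₀ • fhat x₀) ≤ β * V x₀ := by
      by_cases hc : V (fhat x₀) ≤ β * V x₀
      · rw [hγ₁ x₀ hc, one_smul]; exact hc
      · exact le_of_eq (hγ₂ x₀ hc).2
    have hγcont : ContinuousAt γ x₀ := by
      rw [ContinuousAt, tendsto_order]
      constructor
      · -- lower bound
        intro a ha
        by_cases ha0 : a ≤ 0
        · filter_upwards with x
          exact lt_of_le_of_lt ha0 (hγpos x)
        push_neg at ha0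
        have hstrict : V (a • fhat x₀) < β * V x₀ := by
          have h2 : V (a • fhat x₀) < V (γ x₀ • fhat x₀) :=
            hmono x₀ h0 (Set.mem_Ici.2 ha0.le) (Set.mem_Ici.2 hg0pos.le) ha
          exact lt_of_lt_of_le h2 hVle
        have hev : ∀ᶠ x in nhds x₀, V (a • fhat x) < β * V x := by
          have hc1 : ContinuousAt (fun x => V (a • fhat x)) x₀ :=
            (hVc.comp (hfc.const_smul a)).continuousAt
          have hc2 : ContinuousAt (fun x => β * V x) x₀ :=
            (continuous_const.mul hVc).continuousAt
          exact hc1.eventually_lt hc2 hstrict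
        filter_upwards [hev, hne] with x hx hxne
        by_cases hc : V (fhat x) ≤ β * V x
        · rw [hγ₁ x hc]
          exact lt_of_lt_of_le ha hg0le
        · have heq : V (γ x • fhat x) = β * V x := (hγ₂ x hc).2
          have : V (a • fhat x) < V (γ x • fhat x) := by rw [heq]; exact hx
          exact ((hmono x hxne).lt_iff_lt (Set.mem_Ici.2 ha0.le)
            (Set.mem_Ici.2 (hγpos x).le)).mp this
      · -- upper bound
        intro b hb
        by_cases hb1 : 1 < b
        · filter_upwards with x
          exact lt_of_le_of_lt (hγle x) hb1
        push_neg at hb1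
        have hbpos : 0 < b := lt_trans hg0pos hb
        have hstrict : β * V x₀ < V (b • fhat x₀) := by
          have h2 : V (γ x₀ • fhat x₀) < V (b • fhat x₀) :=
            hmono x₀ h0 (Set.mem_Ici.2 hg0pos.le) (Set.mem_Ici.2 hbpos.le) hb
          by_cases hc : V (fhat x₀) ≤ β * V x₀
          · exact absurd (lt_of_lt_of_le hb hb1) (by rw [hγ₁ x₀ hc]; exact lt_irrefl 1)
          · rw [(hγ₂ x₀ hc).2] at h2; exact h2
        have hev : ∀ᶠ x in nhds x₀, β * V x < V (b • fhat x) := by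
          have hc1 : ContinuousAt (fun x => V (b • fhat x)) x₀ :=
            (hVc.comp (hfc.const_smul b)).continuousAt
          have hc2 : ContinuousAt (fun x => β * V x) x₀ :=
            (continuous_const.mul hVc).continuousAt
          exact hc2.eventually_lt hc1 hstrict
        filter_upwards [hev, hne] with x hx hxne
        by_cases hc : V (fhat x) ≤ β * V x
        · exfalso
          have hmle : V (b • fhat x) ≤ V (fhat x) := by
            have := (hmono x hxne).monotoneOn (Set.mem_Ici.2 hbpos.le)
              (Set.mem_Ici.2 zero_le_one) hb1
            simpa using this
          have : β * V x < β * V x := lt_of_lt_of_le (lt_of_lt_of_le hx hmle) hc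
          exact lt_irrefl _ this
        · have heq : V (γ x • fhat x) = β * V x := (hγ₂ x hc).2
          have : V (γ x • fhat x) < V (b • fhat x) := by rw [heq]; exact hx
          exact ((hmono x hxne).lt_iff_lt (Set.mem_Ici.2 (hγpos x).le)
            (Set.mem_Ici.2 hbpos.le)).mp this
    exact hγcont.smul hfc.continuousAt
end

section
/- Let (Ω, 𝒜, P) be a probability space with a filtration (ℱ_t)_{t∈ℕ}, let (x_t)_{t∈ℕ} be an ℝ^n-valued process adapted to (ℱ_t) with E[‖x_t‖^a] finite for all t, let V : ℝ^n → ℝ, a > 0, c₁ > 0, and β ∈ (0,1). Assume c₁‖y‖^a ≤ V(y) for all y, V(x_t) is integrable for all t, and E[V(x_{t+1}) | ℱ_t] ≤ β·V(x_t) almost surely for every t. Then x_t → 0 almost surely as t → ∞. -/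
open MeasureTheory Filter

/-- Almost-sure asymptotic convergence of the state for the stochastic Lyapunov
stability theorem: a coercive Lyapunov function `V` with stepwise expected
contraction along the adapted process `x` forces `x t → 0` almost surely. -/
theorem stmt_12 {n : ℕ} {Ω : Type*} {m : MeasurableSpace Ω} (P : Measure Ω)
    [IsProbabilityMeasure P] (ℱ : Filtration ℕ m)
    (x : ℕ → Ω → EuclideanSpace ℝ (Fin n))
    (V : EuclideanSpace ℝ (Fin n) → ℝ) (a c₁ β : ℝ)
    (ha : 0 < a) (hc₁ : 0 < c₁) (hβ : β ∈ Set.Ioo (0 : ℝ) 1)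
    (hadapted : Adapted ℱ x)
    (hmom : ∀ t, Integrable (fun ω => ‖x t ω‖ ^ a) P)
    (hVlb : ∀ y, c₁ * ‖y‖ ^ a ≤ V y)
    (hVint : ∀ t, Integrable (fun ω => V (x t ω)) P)
    (hcond : ∀ t, ∀ᵐ ω ∂P, (P[fun ω => V (x (t + 1) ω) | ℱ t]) ω ≤ β * V (x t ω)) :
    ∀ᵐ ω ∂P, Tendsto (fun t => x t ω) atTop (nhds 0) := by
  obtain ⟨hβ0, hβ1⟩ := hβ
  -- Step 1: E[V(x_{t+1})] ≤ β * E[V(x_t)]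
  have hstep : ∀ t, ∫ ω, V (x (t + 1) ω) ∂P ≤ β * ∫ ω, V (x t ω) ∂P := by
    intro t
    have h1 : ∫ ω, (P[fun ω => V (x (t + 1) ω) | ℱ t]) ω ∂P = ∫ ω, V (x (t + 1) ω) ∂P :=
      integral_condExp (ℱ.le t)
    rw [← h1]
    calc ∫ ω, (P[fun ω => V (x (t + 1) ω) | ℱ t]) ω ∂P
        ≤ ∫ ω, β * V (x t ω) ∂P :=
          integral_mono_ae integrable_condExp ((hVint t).const_mul β) (hcond t)
      _ = β * ∫ ω, V (x t ω) ∂P := integral_const_mul β _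
  -- Step 2: E[V(x_t)] ≤ β^t * E[V(x_0)]
  have hgeo : ∀ t, ∫ ω, V (x t ω) ∂P ≤ β ^ t * ∫ ω, V (x 0 ω) ∂P := by
    intro t
    induction t with
    | zero => simp
    | succ t ih =>
        calc ∫ ω, V (x (t + 1) ω) ∂P ≤ β * ∫ ω, V (x t ω) ∂P := hstep t
          _ ≤ β * (β ^ t * ∫ ω, V (x 0 ω) ∂P) := by
              exact mul_le_mul_of_nonneg_left ih hβ0.le
          _ = β ^ (t + 1) * ∫ ω, V (x 0 ω) ∂P := by ring
  set C : ℝ := ∫ ω, V (x 0 ω) ∂P with hC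
  -- nonnegativity of ‖x t ω‖ ^ a
  have hnn : ∀ t (ω : Ω), 0 ≤ ‖x t ω‖ ^ a := fun t ω => Real.rpow_nonneg (norm_nonneg _) a
  -- Step 3: E[‖x_t‖^a] ≤ β^t * C / c₁
  have hmombd : ∀ t, ∫ ω, ‖x t ω‖ ^ a ∂P ≤ β ^ t * (C / c₁) := by
    intro t
    have h2 : c₁ * ∫ ω, ‖x t ω‖ ^ a ∂P ≤ ∫ ω, V (x t ω) ∂P := by
      rw [← integral_const_mul]
      exact integral_mono ((hmom t).const_mul c₁) (hVint t) (fun ω => hVlb (x t ω))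
    have := h2.trans (hgeo t)
    rw [← mul_div_assoc, le_div_iff₀ hc₁]
    linarith [this]
  -- Step 4: sum of lintegrals is finite
  have hmeas : ∀ t, AEMeasurable (fun ω => ENNReal.ofReal (‖x t ω‖ ^ a)) P :=
    fun t => (hmom t).aestronglyMeasurable.aemeasurable.ennreal_ofReal
  have hlin : ∀ t, ∫⁻ ω, ENNReal.ofReal (‖x t ω‖ ^ a) ∂P
      = ENNReal.ofReal (∫ ω, ‖x t ω‖ ^ a ∂P) := by
    intro t
    rw [← ofReal_integral_eq_lintegral_ofReal (hmom t) (Eventually.of_forall (hnn t))]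
  have hsumfin : ∑' t, ∫⁻ ω, ENNReal.ofReal (‖x t ω‖ ^ a) ∂P ≠ ⊤ := by
    have hbd : ∀ t, ∫⁻ ω, ENNReal.ofReal (‖x t ω‖ ^ a) ∂P
        ≤ ENNReal.ofReal (β ^ t * (C / c₁)) := by
      intro t
      rw [hlin t]
      exact ENNReal.ofReal_le_ofReal (hmombd t)
    refine ne_top_of_le_ne_top ?_ (ENNReal.tsum_le_tsum hbd)
    have hsummable : Summable (fun t => β ^ t * (C / c₁)) :=
      (summable_geometric_of_lt_one hβ0.le hβ1).mul_right _
    have hnn' : ∀ t, 0 ≤ β ^ t * (C / c₁) := by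
      intro t
      have hC0 : 0 ≤ C := by
        have := hgeo 0
        have h0 : (0:ℝ) ≤ ∫ ω, V (x 0 ω) ∂P :=
          integral_nonneg fun ω => le_trans (mul_nonneg hc₁.le (hnn 0 ω)) (hVlb (x 0 ω))
        exact h0
      positivity
    rw [← ENNReal.ofReal_tsum_of_nonneg hnn' hsummable]
    exact ENNReal.ofReal_ne_top
  have hlint : ∫⁻ ω, ∑' t, ENNReal.ofReal (‖x t ω‖ ^ a) ∂P ≠ ⊤ := by
    rw [lintegral_tsum hmeas]
    exact hsumfin
  have hae : ∀ᵐ ω ∂P, ∑' t, ENNReal.ofReal (‖x t ω‖ ^ a) ≠ ⊤ :=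
    ae_lt_top' (AEMeasurable.ennreal_tsum hmeas) hlint |>.mono fun ω h => h.ne
  -- Step 5: conclude a.s. convergence
  filter_upwards [hae] with ω hω
  have hsum : Summable (fun t => ‖x t ω‖ ^ a) := by
    have := ENNReal.summable_toReal hω
    simpa [ENNReal.toReal_ofReal (hnn _ ω)] using this
  have h0 : Tendsto (fun t => ‖x t ω‖ ^ a) atTop (nhds 0) := hsum.tendsto_atTop_zero
  have h1 : Tendsto (fun t => (‖x t ω‖ ^ a) ^ a⁻¹) atTop (nhds 0) := by
    have hc : ContinuousAt (fun y : ℝ => y ^ a⁻¹) 0 :=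
      (Real.continuousAt_rpow_const 0 a⁻¹ (Or.inr (by positivity)))
    have := hc.tendsto.comp h0
    simpa [Function.comp_def, Real.zero_rpow (by positivity : a⁻¹ ≠ 0)] using this
  have h2 : Tendsto (fun t => ‖x t ω‖) atTop (nhds 0) := by
    refine h1.congr fun t => ?_
    rw [← Real.rpow_mul (norm_nonneg _), mul_inv_cancel₀ ha.ne', Real.rpow_one]
  rw [tendsto_zero_iff_norm_tendsto_zero]
  exact h2
end
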